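/- arXiv:2107.09114 — 5 statements merged into one kernel-verified Lean document; each statement's English description precedes it below -/
import Mathlib

section
/- Let m be a positive integer, and let p < q be primes with q ≤ m. If α_p and α_q denote the exponents of p and q respectively in the prime factorization of m!, then α_p / α_q ≥ ⌊q/p⌋, i.e., α_p ≥ ⌊q/p⌋ · α_q. -/
theorem factorization_factorial_ratio (m p q : ℕ) (hm : 0 < m)
    (hp : p.Prime) (hq : q.Prime) (hpq : p < q) (hqm : q ≤ m) :
    (m.factorial.factorization p) ≥ (q / p) * (m.factorial.factorization q) := by
  haveI : Fact p.Prime := ⟨hp⟩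
  haveI : Fact q.Prime := ⟨hq⟩
  rw [Nat.factorization_def _ hp, Nat.factorization_def _ hq,
    padicValNat_factorial (n := m) (b := m + 1) (Nat.lt_succ_of_le (Nat.log_le_self p m)),
    padicValNat_factorial (n := m) (b := m + 1) (Nat.lt_succ_of_le (Nat.log_le_self q m)),
    Finset.mul_sum]
  apply Finset.sum_le_sum
  intro i hi
  simp only [Finset.mem_Ico] at hi
  rw [Nat.le_div_iff_mul_le (pow_pos hp.pos i)]
  calc q / p * (m / q ^ i) * p ^ i = q / p * p ^ i * (m / q ^ i) := by ring
    _ ≤ q ^ i * (m / q ^ i) := by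
        apply Nat.mul_le_mul_right
        obtain ⟨j, rfl⟩ : ∃ j, i = j + 1 := ⟨i - 1, by omega⟩
        calc q / p * p ^ (j + 1) = q / p * p * p ^ j := by ring
          _ ≤ q * p ^ j := Nat.mul_le_mul_right _ (Nat.div_mul_le_self q p)
          _ ≤ q * q ^ j := Nat.mul_le_mul_left _ (Nat.pow_le_pow_left hpq.le j)
          _ = q ^ (j + 1) := by ring
    _ ≤ m := by rw [Nat.mul_comm]; exact Nat.div_mul_le_self m (q ^ i)
end

section
/- Let m be a positive integer and let p < q be primes with q ≤ m. Let k be a positive integer with kp < q. Then ⌊m/p⌋ ≥ k·⌊m/q⌋. -/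
theorem floor_div_ge (m p q k : ℕ) (hm : 0 < m) (hk : 0 < k)
    (hp : p.Prime) (hq : q.Prime) (hpq : p < q) (hqm : q ≤ m) (hkp : k * p < q) :
    m / p ≥ k * (m / q) := by
  rw [ge_iff_le, Nat.le_div_iff_mul_le hp.pos]
  calc k * (m / q) * p = (m / q) * (k * p) := by ring
    _ ≤ (m / q) * q := Nat.mul_le_mul_left _ hkp.le
    _ ≤ m := Nat.div_mul_le_self m q
end

section
/- Let a_1, ..., a_k be positive real numbers and z > 0. Then the number N_k(z) of k-tuples (ν_1, ..., ν_k) of non-negative integers with Σ ν_i a_i ≤ z satisfies N_k(z) ≤ ((z + Σ_{i=1}^k a_i)^k / k!) · Π_{i=1}^k (1/a_i). -/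
set_option maxHeartbeats 1000000

open Finset

lemma finite_S (k : ℕ) (a : Fin k → ℝ) (ha : ∀ i, 0 < a i) (z : ℝ) :
    ({ν : Fin k → ℕ | ∑ i, (ν i : ℝ) * a i ≤ z}).Finite := by
  apply Set.Finite.subset (Set.Finite.pi (fun i : Fin k => Set.finite_Iic (⌊z / a i⌋₊)))
  intro ν hν
  simp only [Set.mem_setOf_eq] at hν
  intro i _
  simp only [Set.mem_Iic]
  apply Nat.le_floor
  rw [le_div_iff₀ (ha i)]
  refine le_trans ?_ hν
  apply Finset.single_le_sum (f := fun j => (ν j : ℝ) * a j) ?_ (Finset.mem_univ i)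
  intro j _
  exact mul_nonneg (Nat.cast_nonneg _) (ha j).le

lemma binom_aux (x y : ℝ) (hx : 0 ≤ x) (hy : 0 ≤ y) (k : ℕ) :
    x^(k+1) + (k+1) * y * x^k ≤ (x+y)^(k+1) := by
  rw [add_pow]
  have hsub : ({k, k+1} : Finset ℕ) ⊆ range (k+2) := by
    intro j hj; simp at hj; rcases hj with h|h <;> simp [h]
  calc x^(k+1) + (k+1) * y * x^k
      = ∑ j ∈ ({k, k+1} : Finset ℕ), x ^ j * y ^ (k + 1 - j) * ((k+1).choose j : ℝ) := by
        rw [Finset.sum_pair (by omega)]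
        simp [Nat.choose_self, Nat.choose_succ_self_right]
        ring
    _ ≤ ∑ j ∈ range (k+2), x ^ j * y ^ (k + 1 - j) * ((k+1).choose j : ℝ) := by
        apply Finset.sum_le_sum_of_subset_of_nonneg hsub
        intro j _ _; positivity

lemma ncard_biUnion_le {X : Type*} (n : ℕ) (f : ℕ → Set X) :
    (⋃ m ∈ Finset.range n, f m).ncard ≤ ∑ m ∈ Finset.range n, (f m).ncard := by
  induction n with
  | zero => simp
  | succ n ih =>
    rw [Finset.sum_range_succ, Finset.range_add_one]
    simp only [Finset.mem_insert, Set.iUnion_iUnion_eq_or_left]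
    calc (f n ∪ ⋃ m ∈ Finset.range n, f m).ncard
        ≤ (f n).ncard + (⋃ m ∈ Finset.range n, f m).ncard := Set.ncard_union_le _ _
      _ ≤ (f n).ncard + ∑ m ∈ Finset.range n, (f m).ncard := by omega
      _ = _ := by omega

lemma key : ∀ (k : ℕ) (a : Fin k → ℝ), (∀ i, 0 < a i) → ∀ z : ℝ, 0 ≤ z →
    ((Set.ncard {ν : Fin k → ℕ | ∑ i, (ν i : ℝ) * a i ≤ z}) : ℝ) * (k.factorial : ℝ) * ∏ i, a i
      ≤ (z + ∑ i, a i) ^ k := by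
  intro k
  induction k with
  | zero =>
    intro a ha z hz
    have : {ν : Fin 0 → ℕ | ∑ i, (ν i : ℝ) * a i ≤ z} = Set.univ := by
      ext ν; simp [hz]
    rw [this]
    simp [Set.ncard_univ]
  | succ k IH =>
    intro a ha z hz
    set α := a (Fin.last k) with hα
    set a' : Fin k → ℝ := fun i => a i.castSucc with ha'
    have ha'pos : ∀ i, 0 < a' i := fun i => ha _
    have hαpos : 0 < α := ha _
    set M := ⌊z / α⌋₊ with hM
    set S' := ∑ i, a' i with hS'
    have hS'nonneg : 0 ≤ S' := Finset.sum_nonneg fun i _ => (ha'pos i).le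
    -- counting step
    have hcount : ((Set.ncard {ν : Fin (k+1) → ℕ | ∑ i, (ν i : ℝ) * a i ≤ z}) : ℝ) ≤
        ∑ m ∈ range (M+1),
          ((Set.ncard {μ : Fin k → ℕ | ∑ i, (μ i : ℝ) * a' i ≤ z - m * α}) : ℝ) := by
      have hfin := finite_S (k+1) a ha z
      have hfin' : ∀ m : ℕ, ({μ : Fin k → ℕ | ∑ i, (μ i : ℝ) * a' i ≤ z - m * α}).Finite :=
        fun m => finite_S k a' ha'pos _
      have hsubset : {ν : Fin (k+1) → ℕ | ∑ i, (ν i : ℝ) * a i ≤ z} ⊆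
          ⋃ m ∈ range (M+1), (fun μ : Fin k → ℕ => (Fin.snoc μ m : Fin (k+1) → ℕ)) ''
            {μ : Fin k → ℕ | ∑ i, (μ i : ℝ) * a' i ≤ z - m * α} := by
        intro ν hν
        simp only [Set.mem_setOf_eq] at hν
        rw [Fin.sum_univ_castSucc] at hν
        have hterms : ∀ j : Fin k, 0 ≤ (ν j.castSucc : ℝ) * a' j :=
          fun j => mul_nonneg (Nat.cast_nonneg _) (ha'pos j).le
        have hsum_nonneg : 0 ≤ ∑ i, (ν i.castSucc : ℝ) * a' i :=
          Finset.sum_nonneg fun i _ => hterms i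
        have hmem : ν (Fin.last k) ∈ range (M+1) := by
          rw [Finset.mem_range, Nat.lt_succ_iff, hM]
          apply Nat.le_floor
          rw [le_div_iff₀ hαpos]
          nlinarith [hν, hsum_nonneg]
        refine Set.mem_biUnion hmem ?_
        refine ⟨Fin.init ν, ?_, Fin.snoc_init_self ν⟩
        simp only [Set.mem_setOf_eq, Fin.init]
        linarith [hν, hsum_nonneg]
      have hcard : (Set.ncard {ν : Fin (k+1) → ℕ | ∑ i, (ν i : ℝ) * a i ≤ z}) ≤
          ∑ m ∈ range (M+1),
            (Set.ncard {μ : Fin k → ℕ | ∑ i, (μ i : ℝ) * a' i ≤ z - m * α}) := by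
        have hUfin : (⋃ m ∈ range (M+1), (fun μ : Fin k → ℕ => (Fin.snoc μ m : Fin (k+1) → ℕ)) ''
            {μ : Fin k → ℕ | ∑ i, (μ i : ℝ) * a' i ≤ z - m * α}).Finite := by
          apply Set.Finite.biUnion (Finset.finite_toSet _)
          intro m _
          exact (hfin' m).image _
        calc Set.ncard {ν : Fin (k+1) → ℕ | ∑ i, (ν i : ℝ) * a i ≤ z}
            ≤ (⋃ m ∈ range (M+1), (fun μ : Fin k → ℕ => (Fin.snoc μ m : Fin (k+1) → ℕ)) ''
                {μ : Fin k → ℕ | ∑ i, (μ i : ℝ) * a' i ≤ z - m * α}).ncard :=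
              Set.ncard_le_ncard hsubset hUfin
          _ ≤ ∑ m ∈ range (M+1), ((fun μ : Fin k → ℕ => (Fin.snoc μ m : Fin (k+1) → ℕ)) ''
                {μ : Fin k → ℕ | ∑ i, (μ i : ℝ) * a' i ≤ z - m * α}).ncard :=
              ncard_biUnion_le _ _
          _ ≤ ∑ m ∈ range (M+1),
                (Set.ncard {μ : Fin k → ℕ | ∑ i, (μ i : ℝ) * a' i ≤ z - m * α}) := by
              apply Finset.sum_le_sum
              intro m _
              exact Set.ncard_image_le (hfin' m)
      calc ((Set.ncard {ν : Fin (k+1) → ℕ | ∑ i, (ν i : ℝ) * a i ≤ z}) : ℝ)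
          ≤ ((∑ m ∈ range (M+1),
              (Set.ncard {μ : Fin k → ℕ | ∑ i, (μ i : ℝ) * a' i ≤ z - m * α}) : ℕ) : ℝ) :=
            Nat.cast_le.2 hcard
        _ = _ := by push_cast; rfl
    -- main chain
    have hfact : ((k+1).factorial : ℝ) = (k.factorial : ℝ) * (k+1) := by
      push_cast [Nat.factorial_succ]; ring
    have hprod : ∏ i, a i = (∏ i, a' i) * α := by
      rw [Fin.prod_univ_castSucc]
    have hsum : ∑ i, a i = S' + α := by
      rw [Fin.sum_univ_castSucc]
    have hprodnn : 0 ≤ ∏ i, a' i := Finset.prod_nonneg fun i _ => (ha'pos i).le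
    set g : ℕ → ℝ := fun m => (z + S' + α - m * α) ^ (k+1) with hg
    calc ((Set.ncard {ν : Fin (k+1) → ℕ | ∑ i, (ν i : ℝ) * a i ≤ z}) : ℝ)
          * ((k+1).factorial : ℝ) * ∏ i, a i
        ≤ (∑ m ∈ range (M+1),
            ((Set.ncard {μ : Fin k → ℕ | ∑ i, (μ i : ℝ) * a' i ≤ z - m * α}) : ℝ))
          * ((k+1).factorial : ℝ) * ∏ i, a i := by
          apply mul_le_mul_of_nonneg_right (mul_le_mul_of_nonneg_right hcount (by positivity))
          rw [hprod]; positivity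
      _ = ∑ m ∈ range (M+1),
            (((Set.ncard {μ : Fin k → ℕ | ∑ i, (μ i : ℝ) * a' i ≤ z - m * α}) : ℝ)
              * (k.factorial : ℝ) * ∏ i, a' i) * ((k+1) * α) := by
          simp only [Finset.sum_mul]
          apply Finset.sum_congr rfl
          intro m _
          rw [hfact, hprod]; ring
      _ ≤ ∑ m ∈ range (M+1), (z - m * α + S') ^ k * ((k+1) * α) := by
          apply Finset.sum_le_sum
          intro m hm
          apply mul_le_mul_of_nonneg_right _ (by positivity)
          apply IH a' ha'pos
          rw [Finset.mem_range, Nat.lt_succ_iff, hM] at hm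
          have : (m : ℝ) ≤ z / α := le_trans (Nat.cast_le.2 hm) (Nat.floor_le (by positivity))
          rw [le_div_iff₀ hαpos] at this
          linarith
      _ ≤ ∑ m ∈ range (M+1), (g m - g (m+1)) := by
          apply Finset.sum_le_sum
          intro m hm
          rw [Finset.mem_range, Nat.lt_succ_iff, hM] at hm
          have hmz : (m : ℝ) * α ≤ z := by
            have : (m : ℝ) ≤ z / α := le_trans (Nat.cast_le.2 hm) (Nat.floor_le (by positivity))
            rw [le_div_iff₀ hαpos] at this; exact this
          have hx : (0:ℝ) ≤ z - m * α + S' := by linarith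
          have := binom_aux (z - m * α + S') α hx hαpos.le k
          have e1 : z - m * α + S' + α = z + S' + α - m * α := by ring
          have e2 : z + S' + α - (m+1 : ℕ) * α = z - m * α + S' := by push_cast; ring
          simp only [hg, e2]
          rw [e1] at this
          linarith
      _ = g 0 - g (M+1) := Finset.sum_range_sub' g (M+1)
      _ ≤ g 0 := by
          have : 0 ≤ g (M+1) := by
            apply pow_nonneg
            have hmz : ((M:ℝ)) * α ≤ z := by
              have : (M : ℝ) ≤ z / α := Nat.floor_le (by positivity)
              rw [le_div_iff₀ hαpos] at this; exact this
            push_cast; nlinarith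
          linarith
      _ = (z + ∑ i, a i) ^ (k+1) := by rw [hsum, hg]; ring

theorem ennola_upper (k : ℕ) (hk : 0 < k) (a : Fin k → ℝ) (ha : ∀ i, 0 < a i)
    (z : ℝ) (hz : 0 < z) :
    ((Set.ncard {ν : Fin k → ℕ | ∑ i, (ν i : ℝ) * a i ≤ z} : ℝ)) ≤
      (z + ∑ i, a i) ^ k / (k.factorial : ℝ) * ∏ i, (1 / a i) := by
  have h := key k a ha z hz.le
  have hprod : 0 < ∏ i, a i := Finset.prod_pos fun i _ => ha i
  have hfact : (0:ℝ) < k.factorial := by positivity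
  rw [Finset.prod_div_distrib]
  simp only [Finset.prod_const_one]
  rw [mul_one_div, div_div, le_div_iff₀ (by positivity), ← mul_assoc]
  exact h
end

section
/- For every integer k ≥ 1, the number n_k = 2^(3k+3) · 3^(k+1) has at least k distinct representations as a product of factorials; namely, for each j with 1 ≤ j ≤ k, n_k = (4!)^j · (3!)^(k+1-j) · (2!)^(2(k+1-j)). -/
theorem nk_has_k_reps (k : ℕ) (hk : 1 ≤ k) :
    ∃ S : Finset (Multiset ℕ), S.card = k ∧
      (∀ s ∈ S, (∀ m ∈ s, 2 ≤ m) ∧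
        (s.map Nat.factorial).prod = 2 ^ (3 * k + 3) * 3 ^ (k + 1)) ∧
      ∀ j, 1 ≤ j → j ≤ k →
        (Multiset.replicate j 4 + Multiset.replicate (k + 1 - j) 3 +
          Multiset.replicate (2 * (k + 1 - j)) 2) ∈ S := by
  classical
  set f : ℕ → Multiset ℕ := fun j =>
    Multiset.replicate j 4 + Multiset.replicate (k + 1 - j) 3 +
      Multiset.replicate (2 * (k + 1 - j)) 2 with hf
  refine ⟨(Finset.Icc 1 k).image f, ?_, ?_, ?_⟩
  · rw [Finset.card_image_of_injOn, Nat.card_Icc]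
    · omega
    · intro a _ b _ hab
      have h4 : ∀ j, Multiset.count 4 (f j) = j := by
        intro j
        simp [hf, Multiset.count_replicate]
      have := congrArg (Multiset.count 4) hab
      rwa [h4, h4] at this
  · intro s hs
    obtain ⟨j, hj, rfl⟩ := Finset.mem_image.mp hs
    simp only [Finset.mem_Icc] at hj
    constructor
    · intro m hm
      simp only [hf, Multiset.mem_add, Multiset.mem_replicate] at hm
      omega
    · obtain ⟨m, hm⟩ : ∃ m, k + 1 - j = m ∧ j + m = k + 1 := ⟨k + 1 - j, rfl, by omega⟩
      obtain ⟨hm1, hm2⟩ := hm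
      simp only [hf, hm1, Multiset.map_add, Multiset.map_replicate, Multiset.prod_add,
        Multiset.prod_replicate]
      have h24 : (Nat.factorial 4 : ℕ) ^ j = 2 ^ (3 * j) * 3 ^ j := by
        rw [pow_mul, ← mul_pow]; norm_num [Nat.factorial]
      have h6 : (Nat.factorial 3 : ℕ) ^ m = 2 ^ m * 3 ^ m := by
        rw [← mul_pow]; norm_num [Nat.factorial]
      have h2 : (Nat.factorial 2 : ℕ) ^ (2 * m) = 2 ^ (2 * m) := by
        norm_num [Nat.factorial]
      rw [h24, h6, h2, show 3 * k + 3 = 3 * j + (m + 2 * m) by omega,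
        show k + 1 = j + m by omega, pow_add, pow_add, pow_add]
      ring
  · intro j hj1 hjk
    exact Finset.mem_image.mpr ⟨j, Finset.mem_Icc.mpr ⟨hj1, hjk⟩, rfl⟩
end

section
/- Every positive integer that can be written as a product of prime factorials has a unique such representation: if Π_{i=1}^r (p_i!)^{α_i} = Π_{i=1}^r (p_i!)^{β_i} where p_1 < p_2 < ... < p_r are the first r primes and α_i, β_i are non-negative integers, then α_i = β_i for all i. -/
lemma val_prod (r : ℕ) (γ : Fin r → ℕ) (p : ℕ) :
    (∏ i : Fin r, ((Nat.nth Nat.Prime i).factorial) ^ (γ i)).factorization p =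
    ∑ i : Fin r, γ i * ((Nat.nth Nat.Prime i).factorial).factorization p := by
  rw [Nat.factorization_prod (fun i _ => pow_ne_zero _ (Nat.factorial_ne_zero _)),
    Finsupp.finset_sum_apply]
  exact Finset.sum_congr rfl fun i _ => by
    rw [Nat.factorization_pow]; simp

theorem prime_factorial_rep_unique (r : ℕ) (α β : Fin r → ℕ)
    (h : ∏ i : Fin r, ((Nat.nth Nat.Prime i).factorial) ^ (α i) =
         ∏ i : Fin r, ((Nat.nth Nat.Prime i).factorial) ^ (β i)) :
    α = β := by
  induction r with
  | zero => funext i; exact i.elim0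
  | succ r ih =>
    set p := Nat.nth Nat.Prime r with hp_def
    have hp : p.Prime := Nat.prime_nth_prime r
    have hv0 : ∀ i : Fin r, ((Nat.nth Nat.Prime (i : ℕ)).factorial).factorization p = 0 := by
      intro i
      have hlt : Nat.nth Nat.Prime (i : ℕ) < p :=
        (Nat.nth_lt_nth Nat.infinite_setOf_prime).mpr i.2
      rw [Nat.factorization_eq_zero_iff]
      right; left
      intro hdvd
      exact absurd ((Nat.Prime.dvd_factorial hp).mp hdvd) (not_le.mpr hlt)
    have hpred : ((p - 1).factorial).factorization p = 0 := by
      rw [Nat.factorization_eq_zero_iff]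
      right; left
      intro hdvd
      have h2 := (Nat.Prime.dvd_factorial hp).mp hdvd
      have h3 := hp.pos
      omega
    have hvlast : ((p.factorial)).factorization p = 1 := by
      rw [← Nat.mul_factorial_pred hp.ne_zero,
        Nat.factorization_mul hp.ne_zero (Nat.factorial_ne_zero _), Finsupp.add_apply,
        hpred, Nat.Prime.factorization hp]
      simp
    have hval := congrArg (fun n => n.factorization p) h
    simp only [val_prod] at hval
    rw [Fin.sum_univ_castSucc, Fin.sum_univ_castSucc] at hval
    simp only [Fin.coe_castSucc, Fin.val_last, ← hp_def, hv0, hvlast, mul_zero, mul_one,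
      Finset.sum_const_zero, zero_add] at hval
    rw [Fin.prod_univ_castSucc, Fin.prod_univ_castSucc] at h
    simp only [Fin.coe_castSucc, Fin.val_last, ← hp_def, hval] at h
    have hcancel := mul_right_cancel₀ (pow_ne_zero _ (Nat.factorial_ne_zero p)) h
    have := ih (fun i => α i.castSucc) (fun i => β i.castSucc) (by simpa using hcancel)
    funext i
    refine Fin.lastCases ?_ ?_ i
    · exact hval
    · intro j; exact congrFun this j
end
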